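/- Let A ∈ ℝ^{M×N} and let s, r, K be positive integers with 1 ≤ r ≤ min(s, K) and s ≤ N. If the map Z ↦ AZ is injective on Σ_{s,r} ⊆ ℝ^{N×K}, then spark(A) > s. -/

import Mathlib

open Matrix

noncomputable section

/-- The set of indices of nonzero rows of a matrix. -/
def rowSupport {N K : ℕ} (X : Matrix (Fin N) (Fin K) ℝ) : Set (Fin N) := {i | X i ≠ 0}

/-- `X` is `s`-row sparse: at most `s` of its rows are nonzero. -/
def RowSparse {N K : ℕ} (s : ℕ) (X : Matrix (Fin N) (Fin K) ℝ) : Prop :=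
  (rowSupport X).ncard ≤ s

/-- `‖X‖₀`: the number of nonzero rows of `X`. -/
def rowL0 {N K : ℕ} (X : Matrix (Fin N) (Fin K) ℝ) : ℕ := (rowSupport X).ncard

/-- `Σ_{s,r}`: matrices in `ℝ^{N×K}` that are `s`-row sparse and have rank at least `r`. -/
def SigmaSR {N K : ℕ} (s r : ℕ) : Set (Matrix (Fin N) (Fin K) ℝ) :=
  {X | RowSparse s X ∧ r ≤ X.rank}

/-- The spark of `A`: the smallest `j` such that some `j` columns of `A` are
linearly dependent (`⊤` if the columns are linearly independent). -/
def spark {M N : ℕ} (A : Matrix (Fin M) (Fin N) ℝ) : ℕ∞ :=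
  sInf {j : ℕ∞ | ∃ S : Finset (Fin N), (S.card : ℕ∞) = j ∧
    ¬ LinearIndependent ℝ (fun i : S => Aᵀ (i : Fin N))}

/-- If the map `Z ↦ A * Z` is injective on `Σ_{s,r} ⊆ ℝ^{N×K}`, then `spark A > s`. -/
lemma rank_ge_of_submatrix_det_ne_zero {N K r : ℕ} (Z : Matrix (Fin N) (Fin K) ℝ)
    (f : Fin r → Fin N) (g : Fin r → Fin K)
    (hdet : (Z.submatrix f g).det ≠ 0) : r ≤ Z.rank := by
  classical
  set W := LinearMap.range Z.mulVecLin with hW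
  have hmem : ∀ t : Fin r, (fun n => Z n (g t)) ∈ W := by
    intro t
    exact ⟨Pi.single (g t) 1, by ext n; simp [Matrix.mulVecLin_apply, Matrix.mulVec_single]⟩
  have hinjv : Function.Injective (Z.submatrix f g).mulVec := by
    have hu : IsUnit (Z.submatrix f g) :=
      (Matrix.isUnit_iff_isUnit_det _).2 (isUnit_iff_ne_zero.2 hdet)
    exact Matrix.mulVec_injective_iff_isUnit.2 hu
  have hli : LinearIndependent ℝ (fun t : Fin r => (⟨fun n => Z n (g t), hmem t⟩ : W)) := by
    apply LinearIndependent.of_comp W.subtype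
    rw [Fintype.linearIndependent_iff]
    intro c hc t
    have h0 : (Z.submatrix f g).mulVec c = 0 := by
      funext t'
      have := congrFun hc (f t')
      simp only [Finset.sum_apply, Pi.smul_apply, Function.comp_apply, Submodule.coe_subtype,
        smul_eq_mul, Pi.zero_apply] at this
      simpa [Matrix.mulVec, dotProduct, Matrix.submatrix_apply, mul_comm] using this
    have : c = 0 := hinjv (by rw [h0, Matrix.mulVec_zero])
    rw [this]; rfl
  have := hli.fintype_card_le_finrank
  simpa [Matrix.rank] using this

theorem statement_0 {M N K : ℕ} (A : Matrix (Fin M) (Fin N) ℝ) (s r : ℕ)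
    (hr1 : 1 ≤ r) (hrs : r ≤ s) (hrK : r ≤ K) (hsN : s ≤ N)
    (hinj : Set.InjOn (fun Z : Matrix (Fin N) (Fin K) ℝ => A * Z)
      (SigmaSR (N := N) (K := K) s r)) :
    (s : ℕ∞) < spark A := by
  classical
  by_contra hcon
  push_neg at hcon
  set 𝒮 : Set ℕ∞ := {j : ℕ∞ | ∃ S : Finset (Fin N), (S.card : ℕ∞) = j ∧
    ¬ LinearIndependent ℝ (fun i : S => Aᵀ (i : Fin N))} with h𝒮
  have hne : 𝒮.Nonempty := by
    by_contra h
    rw [Set.not_nonempty_iff_eq_empty] at h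
    rw [spark, ← h𝒮, h, sInf_empty] at hcon
    exact ENat.coe_ne_top s (top_le_iff.1 hcon)
  have hmem𝒮 : sInf 𝒮 ∈ 𝒮 := csInf_mem hne
  obtain ⟨S, hScard, hSdep⟩ := hmem𝒮
  have hScard_le : S.card ≤ s := by
    have h1 : (S.card : ℕ∞) ≤ (s : ℕ∞) := by rw [hScard]; exact hcon
    exact_mod_cast h1
  rw [Fintype.not_linearIndependent_iff] at hSdep
  obtain ⟨g0, hg0sum, i₀', hi₀'⟩ := hSdep
  set i₀ : Fin N := (i₀' : Fin N) with hi₀def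
  have hi₀S : i₀ ∈ S := i₀'.2
  -- the kernel vector
  set x : Fin N → ℝ := fun n => if h : n ∈ S then g0 ⟨n, h⟩ / g0 i₀' else 0 with hxdef
  have hxi₀ : x i₀ = 1 := by
    simp only [hxdef, dif_pos hi₀S]
    rw [div_self]
    simpa [hi₀def, Subtype.eta] using hi₀'
  have hxsupp : ∀ n, x n ≠ 0 → n ∈ S := by
    intro n hn
    by_contra h
    simp [hxdef, dif_neg h] at hn
  have hAx : A.mulVec x = 0 := by
    funext m
    have hsum : (∑ i : S, g0 i * A m (i : Fin N)) = 0 := by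
      simpa [Matrix.transpose_apply] using congrFun hg0sum m
    have h1 : A.mulVec x m = ∑ n ∈ S, A m n * x n := by
      simp only [Matrix.mulVec, dotProduct]
      exact (Finset.sum_subset S.subset_univ
        (fun n _ hn => by simp [hxdef, dif_neg hn])).symm
    rw [h1, ← Finset.sum_attach S (fun n => A m n * x n)]
    have h2 : ∀ i : {y // y ∈ S}, A m (i : Fin N) * x (i : Fin N) = g0 i * A m (i : Fin N) / g0 i₀' := by
      intro i
      simp only [hxdef, dif_pos i.2, Subtype.coe_eta]
      ring
    rw [Finset.sum_congr rfl (fun i _ => h2 i), ← Finset.sum_div]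
    rw [show (∑ i ∈ S.attach, g0 i * A m (i : Fin N)) = ∑ i : S, g0 i * A m (i : Fin N) from rfl]
    rw [hsum, zero_div]
    rfl
  -- build the index sets
  obtain ⟨T, hST, hTcard⟩ := Finset.exists_superset_card_eq hScard_le (by simpa using hsN)
  obtain ⟨U, hUsub, hUcard⟩ := Finset.exists_subset_card_eq (s := T.erase i₀) (n := r - 1) (by
    rw [Finset.card_erase_of_mem (hST hi₀S), hTcard]; omega)
  have hi₀U : i₀ ∉ U := fun h => (Finset.mem_erase.1 (hUsub h)).1 rfl
  set V : Finset (Fin N) := insert i₀ U with hVdef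
  have hVcard : V.card = r := by
    rw [hVdef, Finset.card_insert_of_notMem hi₀U, hUcard]; omega
  have hVT : V ⊆ T := by
    intro n hn
    rcases Finset.mem_insert.1 hn with h | h
    · exact h ▸ hST hi₀S
    · exact Finset.erase_subset _ _ (hUsub h)
  set e : Fin r ≃ V := (V.equivFinOfCardEq hVcard).symm with hedef
  set f : Fin r → Fin N := fun t => ((e t : V) : Fin N) with hfdef
  have hf : Function.Injective f := fun a b hab => e.injective (Subtype.ext hab)
  set t₀ : Fin r := e.symm ⟨i₀, Finset.mem_insert_self _ _⟩ with ht₀def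
  have hft₀ : f t₀ = i₀ := by simp [hfdef, ht₀def]
  have hrange : ∀ t, f t ∈ T := fun t => hVT (e t).2
  set gc : Fin r → Fin K := Fin.castLE hrK with hgcdef
  have hgc : Function.Injective gc := Fin.castLE_injective hrK
  -- the two matrices
  set Z₂ : Matrix (Fin N) (Fin K) ℝ :=
    fun n k => ∑ t : Fin r, (if n = f t ∧ k = gc t then (1 : ℝ) else 0) with hZ₂def
  set X : Matrix (Fin N) (Fin K) ℝ := fun n k => if k = gc t₀ then x n else 0 with hXdef
  set Z₁ : Matrix (Fin N) (Fin K) ℝ := Z₂ + X with hZ₁def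
  have hZ₂sub : ∀ t' t, Z₂ (f t') (gc t) = if t' = t then 1 else 0 := by
    intro t' t
    have hcong : ∀ u : Fin r,
        (if f t' = f u ∧ gc t = gc u then (1 : ℝ) else 0) =
        if u = t' ∧ u = t then 1 else 0 := by
      intro u
      by_cases h1 : u = t'
      · by_cases h2 : u = t
        · subst h1; subst h2; simp
        · subst h1
          rw [if_neg (fun hh => h2 ((hgc hh.2).symm)), if_neg (fun hh => h2 hh.2)]
      · rw [if_neg (fun hh => h1 ((hf hh.1).symm)), if_neg (fun hh => h1 hh.1)]
    rw [show Z₂ (f t') (gc t) = ∑ u : Fin r, (if f t' = f u ∧ gc t = gc u then (1:ℝ) else 0)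
        from rfl]
    rw [Finset.sum_congr rfl (fun u _ => hcong u)]
    by_cases h : t' = t
    · subst h; simp
    · rw [if_neg h, Finset.sum_eq_zero]
      intro u _
      rw [if_neg]
      rintro ⟨rfl, rfl⟩
      exact h rfl
  have hZ₂row : ∀ n, (∀ t, n ≠ f t) → Z₂ n = 0 := by
    intro n h
    funext k
    rw [show Z₂ n k = ∑ u : Fin r, (if n = f u ∧ k = gc u then (1:ℝ) else 0) from rfl]
    rw [Finset.sum_eq_zero fun u _ => by rw [if_neg]; rintro ⟨h1, -⟩; exact h u h1]
    rfl
  -- row sparsity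
  have hsupp : ∀ Z ∈ ({Z₁, Z₂} : Set (Matrix (Fin N) (Fin K) ℝ)), RowSparse s Z := by
    intro Z hZ
    have hsub : rowSupport Z ⊆ ↑T := by
      intro n hn
      by_contra hnT
      have hnT' : n ∉ T := fun hh => hnT (Finset.mem_coe.2 hh)
      have h2 : Z₂ n = 0 := hZ₂row n (fun t ht => hnT' (ht ▸ hrange t))
      have hx0 : x n = 0 := by
        by_contra hh
        exact hnT' (hST (hxsupp n hh))
      apply hn
      rcases hZ with rfl | rfl
      · funext k
        rw [show Z₁ n k = Z₂ n k + X n k from rfl, congrFun h2 k,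
          show X n k = if k = gc t₀ then x n else 0 from rfl, hx0]
        simp
      · exact h2
    unfold RowSparse
    calc (rowSupport Z).ncard ≤ (↑T : Set (Fin N)).ncard :=
          Set.ncard_le_ncard hsub T.finite_toSet
      _ = s := by rw [Set.ncard_coe_finset, hTcard]
  -- ranks
  have hB₂ : Z₂.submatrix f gc = 1 := by
    ext t' t
    rw [Matrix.submatrix_apply, hZ₂sub, Matrix.one_apply]
  have hrank₂ : r ≤ Z₂.rank := by
    apply rank_ge_of_submatrix_det_ne_zero Z₂ f gc
    rw [hB₂, Matrix.det_one]
    norm_num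
  have hB₁ : Z₁.submatrix f gc =
      Matrix.updateCol 1 t₀ (fun t' => (if t' = t₀ then (1 : ℝ) else 0) + x (f t')) := by
    ext t' t
    rw [Matrix.submatrix_apply, Matrix.updateCol_apply,
      show Z₁ (f t') (gc t) = Z₂ (f t') (gc t) + X (f t') (gc t) from rfl, hZ₂sub,
      show X (f t') (gc t) = if gc t = gc t₀ then x (f t') else 0 from rfl]
    by_cases h : t = t₀
    · subst h; simp
    · have hne' : gc t ≠ gc t₀ := fun hh => h (hgc hh)
      simp [h, hne', Matrix.one_apply]
  have hdet₁ : (Z₁.submatrix f gc).det = 2 := by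
    rw [hB₁, ← Matrix.cramer_apply, Matrix.cramer_one]
    simp [hft₀, hxi₀]
    norm_num
  have hrank₁ : r ≤ Z₁.rank := by
    apply rank_ge_of_submatrix_det_ne_zero Z₁ f gc
    rw [hdet₁]
    norm_num
  -- memberships
  have hZ₁mem : Z₁ ∈ SigmaSR (N := N) (K := K) s r :=
    ⟨hsupp Z₁ (Or.inl rfl), hrank₁⟩
  have hZ₂mem : Z₂ ∈ SigmaSR (N := N) (K := K) s r :=
    ⟨hsupp Z₂ (Or.inr rfl), hrank₂⟩
  -- equal images
  have hAX : A * X = 0 := by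
    ext m k
    rw [Matrix.mul_apply, Matrix.zero_apply]
    by_cases h : k = gc t₀
    · have := congrFun hAx m
      simp only [Matrix.mulVec, dotProduct, Pi.zero_apply] at this
      calc (∑ n, A m n * X n k) = ∑ n, A m n * x n := by
            apply Finset.sum_congr rfl
            intro n _
            rw [show X n k = if k = gc t₀ then x n else 0 from rfl, if_pos h]
        _ = 0 := this
    · apply Finset.sum_eq_zero
      intro n _
      rw [show X n k = if k = gc t₀ then x n else 0 from rfl, if_neg h, mul_zero]
  have hAZ : A * Z₁ = A * Z₂ := by
    rw [hZ₁def, Matrix.mul_add, hAX, add_zero]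
  have hne12 : Z₁ ≠ Z₂ := by
    intro h
    have h1 := congrFun (congrFun h i₀) (gc t₀)
    rw [show Z₁ i₀ (gc t₀) = Z₂ i₀ (gc t₀) + X i₀ (gc t₀) from rfl,
      show X i₀ (gc t₀) = if gc t₀ = gc t₀ then x i₀ else 0 from rfl, if_pos rfl, hxi₀] at h1
    linarith
  exact hne12 (hinj hZ₁mem hZ₂mem hAZ)
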